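/- For every even n ≥ 12, no orientation of the star on n vertices is (2,3)-cordial. More precisely, if n = 2k with k ≥ 6, then for any orientation and any friendly labeling f, the k−1 arcs labeled 0 together with the split of the remaining k arcs among labels 1 and −1 cannot yield a friendly arc labeling. -/

import Mathlib

open Finset

/-- A (0,1)-vertex labeling is friendly if the counts of 0s and 1s differ by at most 1. -/
def vertexFriendly {V : Type*} [Fintype V] (f : V → ℤ) : Prop :=
  |((univ.filter (fun v => f v = 0)).card : ℤ) - ((univ.filter (fun v => f v = 1)).card : ℤ)| ≤ 1

/-- Number of arcs of `A` receiving induced label `i` under `g (u,v) = f v - f u`. -/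
def arcCount {V : Type*} [DecidableEq V] (A : Finset (V × V)) (f : V → ℤ) (i : ℤ) : ℕ :=
  (A.filter (fun p => f p.2 - f p.1 = i)).card

/-- The induced arc labeling is friendly: counts of labels -1, 0, 1 pairwise differ by ≤ 1. -/
def arcFriendly {V : Type*} [DecidableEq V] (A : Finset (V × V)) (f : V → ℤ) : Prop :=
  ∀ i ∈ ({-1, 0, 1} : Set ℤ), ∀ j ∈ ({-1, 0, 1} : Set ℤ),
    |(arcCount A f i : ℤ) - (arcCount A f j : ℤ)| ≤ 1

/-- A digraph (given by its arc set) is (2,3)-cordial. -/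
def cordial23 {V : Type*} [Fintype V] [DecidableEq V] (A : Finset (V × V)) : Prop :=
  ∃ f : V → ℤ, (∀ v, f v = 0 ∨ f v = 1) ∧ vertexFriendly f ∧ arcFriendly A f

/-- An orientation of the star on Fin n with center vertex 0: for a pendant vertex with value
i ≠ 0, the edge is directed away from the center iff o i = true. -/
def starArcs (n : ℕ) (o : ℕ → Bool) : Finset (Fin n × Fin n) :=
  univ.filter (fun p =>
    (p.1.val = 0 ∧ p.2.val ≠ 0 ∧ o p.2.val = true) ∨
    (p.2.val = 0 ∧ p.1.val ≠ 0 ∧ o p.1.val = false))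

/-- For even n = 2k ≥ 12, no orientation of the star on n vertices is (2,3)-cordial. -/
theorem star_even_large_not_cordial (k : ℕ) (hk : 6 ≤ k) :
    ∀ o : ℕ → Bool, ¬ cordial23 (starArcs (2 * k) o) := by
  intro o hc
  obtain ⟨f, hf01, hvf, haf⟩ := hc
  have hnpos : 0 < 2 * k := by omega
  set z : Fin (2 * k) := ⟨0, hnpos⟩ with hz
  -- vertex class sizes
  have hsplit : (univ.filter (fun v : Fin (2*k) => f v = 0)).card
      + (univ.filter (fun v : Fin (2*k) => f v = 1)).card = 2 * k := by
    have h1 : (univ.filter (fun v : Fin (2*k) => f v = 1))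
        = (univ.filter (fun v : Fin (2*k) => ¬ f v = 0)) := by
      ext v
      simp only [mem_filter, mem_univ, true_and]
      rcases hf01 v with h | h <;> simp [h]
    rw [h1, Finset.card_filter_add_card_filter_not, card_univ, Fintype.card_fin]
  have hvf' := hvf
  unfold vertexFriendly at hvf'
  rw [abs_le] at hvf'
  have hk0 : (univ.filter (fun v : Fin (2*k) => f v = 0)).card = k := by omega
  have hk1 : (univ.filter (fun v : Fin (2*k) => f v = 1)).card = k := by omega
  have hfz : (univ.filter (fun v : Fin (2*k) => f v = f z)).card = k := by
    rcases hf01 z with h | h <;> rw [h]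
    · exact hk0
    · exact hk1
  have hfnz : (univ.filter (fun v : Fin (2*k) => ¬ f v = f z)).card = k := by
    have h2 := Finset.card_filter_add_card_filter_not
      (s := (univ : Finset (Fin (2*k)))) (p := fun v => f v = f z)
    rw [card_univ, Fintype.card_fin] at h2
    omega
  set P : Finset (Fin (2*k)) := univ.erase z with hP
  have hzmem : z ∈ univ.filter (fun v : Fin (2*k) => f v = f z) := by simp
  have hPfz : (P.filter (fun v => f v = f z)).card = k - 1 := by
    rw [hP, Finset.filter_erase, Finset.card_erase_of_mem hzmem, hfz]
  have hPfnz : (P.filter (fun v => ¬ f v = f z)).card = k := by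
    rw [hP, Finset.filter_erase, Finset.erase_eq_of_notMem (by simp), hfnz]
  set e : Fin (2*k) → Fin (2*k) × Fin (2*k) :=
    fun v => if o v.val then (z, v) else (v, z) with he
  have hvz : ∀ v : Fin (2*k), v ∈ P ↔ v.val ≠ 0 := by
    intro v
    rw [hP]
    simp [Fin.ext_iff, hz]
  have hA : starArcs (2*k) o = P.image e := by
    ext p
    simp only [starArcs, mem_filter, mem_univ, true_and, mem_image]
    constructor
    · rintro (⟨h1, h2, h3⟩ | ⟨h1, h2, h3⟩)
      · refine ⟨p.2, (hvz p.2).2 h2, ?_⟩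
        have hp1 : p.1 = z := Fin.ext h1
        rw [he]
        simp only [h3, if_true]
        rw [← hp1]
      · refine ⟨p.1, (hvz p.1).2 h2, ?_⟩
        have hp2 : p.2 = z := Fin.ext h1
        rw [he]
        simp only [h3, Bool.false_eq_true, if_false]
        rw [← hp2]
    · rintro ⟨v, hv, rfl⟩
      have hv' := (hvz v).1 hv
      rw [he]
      by_cases ho : o v.val <;> simp [ho, hv', hz]
  have hinj : Set.InjOn e P := by
    intro v hv w hw hvw
    have hv' := (hvz v).1 hv
    have hw' := (hvz w).1 hw
    by_cases h1 : o v.val <;> by_cases h2 : o w.val <;>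
      simp only [he, h1, h2, if_true, if_false, Bool.false_eq_true, Prod.mk.injEq] at hvw
    · exact hvw.2
    · exact absurd (congrArg Fin.val hvw.2) hv'
    · exact absurd (congrArg Fin.val hvw.1) hv'
    · exact hvw.1
  have hcount : ∀ i : ℤ, arcCount (starArcs (2*k) o) f i
      = (P.filter (fun v => f (e v).2 - f (e v).1 = i)).card := by
    intro i
    rw [arcCount, hA, Finset.filter_image]
    exact Finset.card_image_of_injOn (hinj.mono (Finset.coe_subset.mpr (Finset.filter_subset _ P)))
  have hc0 : arcCount (starArcs (2*k) o) f 0 = k - 1 := by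
    rw [hcount, ← hPfz]
    apply congrArg
    apply Finset.filter_congr
    intro v hv
    rw [he]
    by_cases ho : o v.val <;>
      simp only [ho, if_true, Bool.false_eq_true, if_false] <;> omega
  have hc1 : arcCount (starArcs (2*k) o) f 1 + arcCount (starArcs (2*k) o) f (-1) = k := by
    have hdisj : Disjoint (P.filter (fun v => f (e v).2 - f (e v).1 = 1))
        (P.filter (fun v => f (e v).2 - f (e v).1 = -1)) := by
      rw [Finset.disjoint_left]
      intro a ha ha'
      simp only [mem_filter] at ha ha'
      omega
    have hset : P.filter (fun a => f (e a).2 - f (e a).1 = 1 ∨ f (e a).2 - f (e a).1 = -1)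
        = P.filter (fun v => ¬ f v = f z) := by
      apply Finset.filter_congr
      intro v hv
      rw [he]
      by_cases ho : o v.val <;>
        simp only [ho, if_true, Bool.false_eq_true, if_false] <;>
        rcases hf01 v with h1 | h1 <;> rcases hf01 z with h2 | h2 <;> omega
    rw [hcount, hcount, ← Finset.card_union_of_disjoint hdisj, ← Finset.filter_or, hset, hPfnz]
  have h01 := haf 0 (by norm_num) 1 (by norm_num)
  have h0m := haf 0 (by norm_num) (-1) (by norm_num)
  rw [abs_le] at h01 h0m
  omega
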